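/- Let G be a Lie group with Lie algebra 𝔩 acting on M via σ, with action groupoid G ⋉ M ⇒ M. A 1-form Θ on G × M, with components Θ^G : G × M → T*G and Θ^M : G × M → T*M, is multiplicative if and only if there exists a smooth map μ : M → 𝔩* such that for all g,h ∈ G, m ∈ M: (1) Ad_h* μ_{hm} - μ_m = ρ* Θ^M_{(h,m)}, where ρ(x)|_m = (σ_m)_{*e}(x); (2) Θ^G_{(g,m)} = R_{g⁻¹}* μ_{gm}; (3) Θ^M(hg) = σ_g*(Θ^M(h)) + Θ^M(g), i.e. Θ^M : G → Ω¹(M) is a 1-cocycle for the G-module Ω¹(M). -/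

import Mathlib

/-!
STATEMENT 6.  Let `G` be a Lie group with Lie algebra `𝔩 = T₁G` acting on `M` via `σ`,
with action groupoid `G ⋉ M ⇒ M`.  A 1-form `Θ` on `G × M`, with components
`Θ^G : G × M → T*G` and `Θ^M : G × M → T*M`, is multiplicative (i.e.
`Θ(Y_h · X_g, U_m) = Θ(Y_h, X_g · U_m) + Θ(X_g, U_m)` for composable tangent vectors,
where `·` is the tangent groupoid multiplication) if and only if there exists a map
`μ : M → 𝔩*` such that for all `g, h ∈ G`, `m ∈ M`:
 (1) `Ad_h* μ_{hm} - μ_m = ρ* Θ^M_{(h,m)}`, where `ρ(x)|_m = (σ_m)_{*1}(x)`;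
 (2) `Θ^G_{(g,m)} = R_{g⁻¹}* μ_{gm}`;
 (3) `Θ^M(hg) = σ_g*(Θ^M(h)) + Θ^M(g)`, i.e. `Θ^M : G → Ω¹(M)` is a 1-cocycle for the
     `G`-module `Ω¹(M)`.
-/

/-- Chain rule for `mfderiv`, in applied form, with the intermediate point and the
composite function given by hypotheses (to avoid dependent-type rewriting issues). -/
private theorem chain_aux {𝕜 : Type*} [NontriviallyNormedField 𝕜]
    {E : Type*} [NormedAddCommGroup E] [NormedSpace 𝕜 E]
    {H : Type*} [TopologicalSpace H] {I : ModelWithCorners 𝕜 E H}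
    {M : Type*} [TopologicalSpace M] [ChartedSpace H M]
    {E' : Type*} [NormedAddCommGroup E'] [NormedSpace 𝕜 E']
    {H' : Type*} [TopologicalSpace H'] {I' : ModelWithCorners 𝕜 E' H'}
    {M' : Type*} [TopologicalSpace M'] [ChartedSpace H' M']
    {E'' : Type*} [NormedAddCommGroup E''] [NormedSpace 𝕜 E'']
    {H'' : Type*} [TopologicalSpace H''] {I'' : ModelWithCorners 𝕜 E'' H''}
    {M'' : Type*} [TopologicalSpace M''] [ChartedSpace H'' M'']
    {f : M → M'} {g : M' → M''} {F : M → M''} {x : M} {y : M'}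
    (hg : MDifferentiableAt I' I'' g y) (hf : MDifferentiableAt I I' f x)
    (hxy : f x = y) (hF : ∀ z, g (f z) = F z) (X : TangentSpace I x) :
    mfderiv I' I'' g y (mfderiv I I' f x X) = mfderiv I I'' F x X := by
  subst hxy
  have hF' : F = g ∘ f := by funext z; rw [← hF]; rfl
  subst hF'
  rw [mfderiv_comp x hg hf]
  rfl

theorem multiplicative_one_forms_action_groupoid
    {E : Type*} [NormedAddCommGroup E] [NormedSpace ℝ E]
    {H : Type*} [TopologicalSpace H] (I : ModelWithCorners ℝ E H)
    {E' : Type*} [NormedAddCommGroup E'] [NormedSpace ℝ E']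
    {H' : Type*} [TopologicalSpace H'] (J : ModelWithCorners ℝ E' H')
    (G : Type*) [TopologicalSpace G] [ChartedSpace H G] [Group G] [LieGroup I (⊤ : ℕ∞) G]
    (M : Type*) [TopologicalSpace M] [ChartedSpace H' M] [IsManifold J (⊤ : ℕ∞) M]
    -- the smooth action
    (σ : G → M → M)
    (hσ_smooth : ContMDiff (I.prod J) J (⊤ : ℕ∞) (fun p : G × M => σ p.1 p.2))
    (hσ_one : ∀ m, σ 1 m = m)
    (hσ_mul : ∀ g h m, σ (h * g) m = σ h (σ g m))
    -- the 1-form `Θ = (Θ^G, Θ^M)` on the action groupoid `G ⋉ M`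
    (ΘG : ∀ (g : G) (m : M), TangentSpace I g →ₗ[ℝ] ℝ)
    (ΘM : ∀ (g : G) (m : M), TangentSpace J m →ₗ[ℝ] ℝ) :
    -- multiplicativity with respect to the tangent groupoid multiplication:
    -- `Θ((Y_h, V)·(X_g, U)) = Θ(Y_h, V) + Θ(X_g, U)` where `V = σ_*(X_g, U)` and
    -- `(Y_h, V)·(X_g, U) = (L_{h*}X_g + R_{g*}Y_h, U)` at `(hg, m)`
    (∀ (g h : G) (m : M) (X : TangentSpace I g) (Y : TangentSpace I h)
        (U : TangentSpace J m),
      ΘG (h * g) m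
          (mfderiv I I (fun k => h * k) g X + mfderiv I I (fun k => k * g) h Y)
        + ΘM (h * g) m U
      = ΘG h (σ g m) Y
        + ΘM h (σ g m) (mfderiv (I.prod J) J (fun p : G × M => σ p.1 p.2) (g, m) (X, U))
        + ΘG g m X + ΘM g m U)
    ↔
    (∃ μ : (m : M) → (TangentSpace I (1 : G) →ₗ[ℝ] ℝ),
      -- (1) `Ad_h* μ_{hm} - μ_m = ρ* Θ^M_{(h,m)}`
      (∀ (h : G) (m : M) (x : TangentSpace I (1 : G)),
        μ (σ h m) (mfderiv I I (fun k => h * k * h⁻¹) 1 x) - μ m x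
          = ΘM h m (mfderiv I J (fun k => σ k m) 1 x)) ∧
      -- (2) `Θ^G_{(g,m)} = R_{g⁻¹}* μ_{gm}`
      (∀ (g : G) (m : M) (X : TangentSpace I g),
        ΘG g m X = μ (σ g m) (mfderiv I I (fun k => k * g⁻¹) g X)) ∧
      -- (3) `Θ^M(hg) = σ_g*(Θ^M(h)) + Θ^M(g)`
      (∀ (g h : G) (m : M) (U : TangentSpace J m),
        ΘM (h * g) m U
          = ΘM h (σ g m) (mfderiv J J (fun x => σ g x) m U) + ΘM g m U)) := by
  have hσd : MDifferentiable (I.prod J) J (fun p : G × M => σ p.1 p.2) :=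
    hσ_smooth.mdifferentiable (by simp)
  have hσL : ∀ m : M, MDifferentiable I J (fun k : G => σ k m) := fun m =>
    (hσ_smooth.comp (contMDiff_id.prodMk contMDiff_const)).mdifferentiable (by simp)
  have hσR : ∀ g : G, MDifferentiable J J (fun x : M => σ g x) := fun g =>
    (hσ_smooth.comp (contMDiff_const.prodMk contMDiff_id)).mdifferentiable (by simp)
  -- partial derivatives of the action map
  have hpartL : ∀ (g : G) (m : M) (X : TangentSpace I g),
      mfderiv (I.prod J) J (fun p : G × M => σ p.1 p.2) (g, m) (X, (0 : TangentSpace J m))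
        = mfderiv I J (fun k => σ k m) g X := by
    intro g m X
    have h := chain_aux (f := fun k : G => (k, m)) (g := fun p : G × M => σ p.1 p.2)
      (F := fun k : G => σ k m) (hσd (g, m))
      (mdifferentiableAt_id.prodMk mdifferentiableAt_const) rfl (fun z => rfl) X
    rw [mfderiv_prod_left] at h
    exact h
  have hpartR : ∀ (g : G) (m : M) (U : TangentSpace J m),
      mfderiv (I.prod J) J (fun p : G × M => σ p.1 p.2) (g, m) ((0 : TangentSpace I g), U)
        = mfderiv J J (fun x => σ g x) m U := by
    intro g m U
    have h := chain_aux (f := fun x : M => (g, x)) (g := fun p : G × M => σ p.1 p.2)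
      (F := fun x : M => σ g x) (hσd (g, m))
      (mdifferentiableAt_const.prodMk mdifferentiableAt_id) rfl (fun z => rfl) U
    rw [mfderiv_prod_right] at h
    exact h
  constructor
  · -- multiplicativity implies the three identities, with `μ m := ΘG 1 m`
    intro hmult
    have eqA : ∀ (g h : G) (m : M) (Y : TangentSpace I h),
        ΘG (h * g) m (mfderiv I I (fun k => k * g) h Y) = ΘG h (σ g m) Y := by
      intro g h m Y
      have h0 := hmult g h m 0 Y 0
      simpa [Prod.mk_zero_zero, hpartR] using h0
    have eq2 : ∀ (g : G) (m : M) (X : TangentSpace I g),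
        ΘG g m X = ΘG 1 (σ g m) (mfderiv I I (fun k => k * g⁻¹) g X) := by
      intro g m X
      have hA := eqA g 1 m (mfderiv I I (fun k => k * g⁻¹) g X)
      have hc : mfderiv I I (fun k => k * g) 1 (mfderiv I I (fun k => k * g⁻¹) g X) = X := by
        rw [chain_aux (F := (id : G → G)) mdifferentiableAt_mul_right
            mdifferentiableAt_mul_right (mul_inv_cancel g) (fun z => by simp) X, mfderiv_id]
        rfl
      rw [hc] at hA
      have h1g : (ΘG (1 * g) m) X = (ΘG g m) X :=
        congrArg (fun y => ΘG y m X) (one_mul g)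
      exact h1g.symm.trans hA
    have eq3 : ∀ (g h : G) (m : M) (U : TangentSpace J m),
        ΘM (h * g) m U
          = ΘM h (σ g m) (mfderiv J J (fun x => σ g x) m U) + ΘM g m U := by
      intro g h m U
      have h0 := hmult g h m 0 0 U
      rw [hpartR] at h0
      simpa using h0
    have eq1 : ∀ (h : G) (m : M) (x : TangentSpace I (1 : G)),
        ΘG 1 (σ h m) (mfderiv I I (fun k => h * k * h⁻¹) 1 x) - ΘG 1 m x
          = ΘM h m (mfderiv I J (fun k => σ k m) 1 x) := by
      intro h m x
      have hB := hmult 1 h m x 0 0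
      rw [hpartL] at hB
      simp only [map_zero, add_zero, zero_add, mul_one, hσ_one, Prod.mk_zero_zero] at hB
      -- hB : ΘG h m (D(h·)x) = ΘM h m (D(σ·m)x) + ΘG 1 m x
      have h2 := eq2 h m (mfderiv I I (fun k => h * k) 1 x)
      have hc := chain_aux (f := fun k => h * k) (g := fun k => k * h⁻¹)
        (F := fun k => h * k * h⁻¹) mdifferentiableAt_mul_right
        mdifferentiableAt_mul_left (mul_one h) (fun z => rfl) x
      rw [hc] at h2
      have e1 : (ΘG (h * 1) m) ((mfderiv I I (fun k => h * k) 1) x)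
          = (ΘG h m) ((mfderiv I I (fun k => h * k) 1) x) :=
        congrArg (fun y => ΘG y m ((mfderiv I I (fun k => h * k) 1) x)) (mul_one h)
      have e2 : (ΘM h (σ 1 m)) ((mfderiv I J (fun k => σ k m) 1) x)
          = (ΘM h m) ((mfderiv I J (fun k => σ k m) 1) x) :=
        congrArg (fun p => ΘM h p ((mfderiv I J (fun k => σ k m) 1) x)) (hσ_one m)
      linarith [hB, h2, e1, e2]
    exact ⟨fun m => ΘG 1 m, eq1, eq2, eq3⟩
  · -- the three identities imply multiplicativity
    rintro ⟨μ, h1, h2, h3⟩ g h m X Y U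
    have hAd : MDifferentiableAt I I (fun k => h * k * h⁻¹) (1 : G) :=
      MDifferentiableAt.comp (I' := I) (g := fun k => k * h⁻¹) (f := fun k => h * k) 1
        mdifferentiableAt_mul_right mdifferentiableAt_mul_left
    -- the `Y`-term
    have hb : ΘG (h * g) m (mfderiv I I (fun k => k * g) h Y) = ΘG h (σ g m) Y := by
      rw [h2 (h * g) m]
      have hc := chain_aux (f := fun k => k * g) (g := fun k => k * (h * g)⁻¹)
        (F := fun k => k * h⁻¹) mdifferentiableAt_mul_right
        mdifferentiableAt_mul_right rfl (fun z => by group) Y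
      rw [hc, hσ_mul, h2 h (σ g m) Y]
    -- the `X`-term
    have ha : ΘG (h * g) m (mfderiv I I (fun k => h * k) g X)
        = ΘM h (σ g m) (mfderiv I J (fun k => σ k m) g X) + ΘG g m X := by
      rw [h2 (h * g) m]
      have hc1 := chain_aux (f := fun k => h * k) (g := fun k => k * (h * g)⁻¹)
        (F := fun k => h * (k * g⁻¹) * h⁻¹) mdifferentiableAt_mul_right
        mdifferentiableAt_mul_left rfl (fun z => by group) X
      have hc2 := chain_aux (f := fun k => k * g⁻¹) (g := fun k => h * k * h⁻¹)
        (F := fun k => h * (k * g⁻¹) * h⁻¹) hAd mdifferentiableAt_mul_right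
        (mul_inv_cancel g) (fun z => rfl) X
      rw [hc1, ← hc2, hσ_mul]
      have h1' := h1 h (σ g m) (mfderiv I I (fun k => k * g⁻¹) g X)
      have hc3 := chain_aux (f := fun k => k * g⁻¹) (g := fun k => σ k (σ g m))
        (F := fun k => σ k m) (hσL (σ g m) 1) mdifferentiableAt_mul_right
        (mul_inv_cancel g) (fun z => by
          show σ (z * g⁻¹) (σ g m) = σ z m
          rw [← hσ_mul, inv_mul_cancel_right]) X
      rw [hc3] at h1'
      have h2' := h2 g m X
      linarith [h1', h2']
    -- splitting the full derivative of the action into partial derivatives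
    have hDadd : mfderiv (I.prod J) J (fun p : G × M => σ p.1 p.2) (g, m) (X, U)
        = mfderiv I J (fun k => σ k m) g X + mfderiv J J (fun x => σ g x) m U := by
      have hs := (mfderiv (I.prod J) J (fun p : G × M => σ p.1 p.2) (g, m)).map_add (X, 0) (0, U)
      have e1 : mfderiv (I.prod J) J (fun p : G × M => σ p.1 p.2) (g, m) (X, U)
          = mfderiv (I.prod J) J (fun p : G × M => σ p.1 p.2) (g, m) ((X, 0) + (0, U)) :=
        congrArg _ (Prod.ext (add_zero X).symm (zero_add U).symm)
      refine e1.trans (hs.trans ?_)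
      exact congrArg₂ (· + ·) (hpartL g m X) (hpartR g m U)
    have hG := (ΘG (h * g) m).map_add (mfderiv I I (fun k => h * k) g X)
      (mfderiv I I (fun k => k * g) h Y)
    have hMadd := congrArg (fun v => ΘM h (σ g m) v) hDadd
    simp only [map_add] at hMadd
    have hM := h3 g h m U
    linarith [hG, hMadd, ha, hb, hM]
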